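/- arXiv:1808.04209 — 2 statements merged into one kernel-verified Lean document; each statement's English description precedes it below -/
import Mathlib

section
/- Let ρ_S be a density matrix on Fin s and ρ_R a density matrix on Fin r with energy functions E_S : Fin s → ℤ, E_R : Fin r → ℤ. If ρ_R is symmetric, i.e. Δ_R ρ_R = ρ_R, then the global dephasing of the product state factorizes as Π(ρ_S ⊗ ρ_R) = (Δ_S ρ_S) ⊗ ρ_R, and consequently the mutual asymmetry vanishes: A(ρ_S) + A(ρ_R) − A(ρ_S ⊗ ρ_R) = 0. The same conclusion holds with the roles of S and R interchanged (i.e. if Δ_S ρ_S = ρ_S). -/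
open Matrix Kronecker BigOperators ComplexOrder

/-- η(x) = −x·log x -/
noncomputable def entEta (x : ℝ) : ℝ := -x * Real.log x

/-- von Neumann entropy S(ρ) = ∑ η(λ_i(ρ)) using the eigenvalues from the
spectral theorem for Hermitian matrices. -/
noncomputable def vnEntropy {n : Type*} [Fintype n] [DecidableEq n] (ρ : Matrix n n ℂ) : ℝ :=
  if h : ρ.IsHermitian then ∑ i, entEta (h.eigenvalues i) else 0

/-- A density matrix: Hermitian, positive semidefinite, trace one. -/
def IsDensityMatrix {n : Type*} [Fintype n] [DecidableEq n] (ρ : Matrix n n ℂ) : Prop :=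
  ρ.IsHermitian ∧ ρ.PosSemidef ∧ ρ.trace = 1

/-- Pinching of a matrix by a function `f` on the index set. -/
def pinch {I : Type*} {α : Type*} [DecidableEq α] (f : I → α) (M : Matrix I I ℂ) :
    Matrix I I ℂ :=
  Matrix.of fun i j => if f i = f j then M i j else 0

/-- Relative entropy of asymmetry A(ρ) = S(P_f ρ) − S(ρ). -/
noncomputable def asym {I : Type*} [Fintype I] [DecidableEq I] {α : Type*} [DecidableEq α]
    (f : I → α) (ρ : Matrix I I ℂ) : ℝ :=
  vnEntropy (pinch f ρ) - vnEntropy ρ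

/-- Energy function of the global dephasing Π. -/
def globalE {s r : ℕ} (ES : Fin s → ℤ) (ER : Fin r → ℤ) : Fin s × Fin r → ℤ :=
  fun p => ES p.1 + ER p.2

/-- Energy function of the local dephasing Δ. -/
def localE {s r : ℕ} (ES : Fin s → ℤ) (ER : Fin r → ℤ) : Fin s × Fin r → ℤ × ℤ :=
  fun p => (ES p.1, ER p.2)


open Polynomial
section Aux

variable {n : Type*} [Fintype n] [DecidableEq n]

lemma charmatrix_diagonal (d : n → ℂ) :
    charmatrix (diagonal d) = diagonal (fun i => (X : ℂ[X]) - C (d i)) := by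
  ext i j
  by_cases h : i = j
  · subst h; simp [charmatrix_apply]
  · simp [charmatrix_apply, diagonal_apply_ne _ h, h]

lemma charpoly_diagonal (d : n → ℂ) :
    (diagonal d).charpoly = (Finset.univ.val.map (fun i => (X : ℂ[X]) - C (d i))).prod := by
  rw [Matrix.charpoly, _root_.charmatrix_diagonal, det_diagonal]
  rfl

lemma charpoly_unitary_conj (U M : Matrix n n ℂ) (hU : U ∈ Matrix.unitaryGroup n ℂ) :
    (U * M * star U).charpoly = M.charpoly := by
  have hmap : ∀ A B : Matrix n n ℂ, (A * B).map (C : ℂ →+* ℂ[X]) = A.map C * B.map C := by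
    intro A B; exact Matrix.map_mul
  have h1 : charmatrix (U * M * star U) = U.map C * charmatrix M * (star U).map C := by
    rw [charmatrix, charmatrix, RingHom.mapMatrix_apply, RingHom.mapMatrix_apply,
      hmap, hmap, mul_sub, sub_mul]
    congr 1
    have hc : U.map (C : ℂ →+* ℂ[X]) * (scalar n) X = (scalar n) X * U.map C :=
      (Matrix.scalar_commute (X : ℂ[X]) (fun r' => Commute.all _ _) (U.map C)).symm
    rw [hc, mul_assoc, ← hmap]
    have h2 : U * star U = 1 := (Matrix.mem_unitaryGroup_iff).mp hU
    rw [h2]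
    simp
  rw [Matrix.charpoly, Matrix.charpoly, h1, det_mul, det_mul, mul_comm, ← mul_assoc, ← det_mul,
    ← hmap]
  have : star U * U = 1 := (Matrix.mem_unitaryGroup_iff').mp hU
  rw [this]
  simp

lemma eig_multiset_eq {M : Matrix n n ℂ} (hM : M.IsHermitian) (d : n → ℝ)
    (U : Matrix n n ℂ) (hU : U ∈ Matrix.unitaryGroup n ℂ)
    (h : M = U * diagonal (fun i => (d i : ℂ)) * star U) :
    Finset.univ.val.map hM.eigenvalues = Finset.univ.val.map d := by
  have h1 : M.charpoly = (diagonal (fun i => ((hM.eigenvalues i : ℝ) : ℂ))).charpoly := by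
    conv_lhs => rw [hM.spectral_theorem]
    exact charpoly_unitary_conj _ _ (hM.eigenvectorUnitary).2
  have h2 : M.charpoly = (diagonal (fun i => (d i : ℂ))).charpoly := by
    rw [h]; exact charpoly_unitary_conj _ _ hU
  have h3 := h1.symm.trans h2
  rw [_root_.charpoly_diagonal, _root_.charpoly_diagonal] at h3
  have h4 : (Finset.univ.val.map (fun i => ((hM.eigenvalues i : ℝ) : ℂ)))
      = (Finset.univ.val.map (fun i => (d i : ℂ))) := by
    have e1 := Polynomial.roots_multiset_prod_X_sub_C
      (Finset.univ.val.map (fun i => ((hM.eigenvalues i : ℝ) : ℂ)))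
    have e2 := Polynomial.roots_multiset_prod_X_sub_C
      (Finset.univ.val.map (fun i => (d i : ℂ)))
    rw [← e1, ← e2]
    simp only [Multiset.map_map, Function.comp]
    rw [h3]
  have h5 : ((Finset.univ.val.map hM.eigenvalues).map (fun x : ℝ => (x : ℂ)))
      = ((Finset.univ.val.map d).map (fun x : ℝ => (x : ℂ))) := by
    rw [Multiset.map_map, Multiset.map_map]; exact h4
  exact Multiset.map_injective (fun a b => Complex.ofReal_inj.mp) h5

lemma sum_f_eig {M : Matrix n n ℂ} (hM : M.IsHermitian) (d : n → ℝ)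
    (U : Matrix n n ℂ) (hU : U ∈ Matrix.unitaryGroup n ℂ)
    (h : M = U * diagonal (fun i => (d i : ℂ)) * star U) (f : ℝ → ℝ) :
    ∑ i, f (hM.eigenvalues i) = ∑ i, f (d i) := by
  have h5 := congrArg (fun m => (Multiset.map f m).sum) (eig_multiset_eq hM d U hU h)
  simp only [Multiset.map_map, Function.comp] at h5
  exact h5

lemma sum_eig_eq_one {M : Matrix n n ℂ} (hM : M.IsHermitian) (ht : M.trace = 1) :
    ∑ i, hM.eigenvalues i = 1 := by
  have h1 : M.trace = ∑ i, ((hM.eigenvalues i : ℝ) : ℂ) := by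
    conv_lhs => rw [hM.spectral_theorem, Unitary.conjStarAlgAut_apply]
    rw [Matrix.trace_mul_comm, ← mul_assoc]
    have h2 : star (hM.eigenvectorUnitary : Matrix n n ℂ) * (hM.eigenvectorUnitary : Matrix n n ℂ)
        = 1 := (Matrix.mem_unitaryGroup_iff').mp (hM.eigenvectorUnitary).2
    rw [h2, one_mul, Matrix.trace_diagonal]
    rfl
  rw [ht] at h1
  have := h1.symm
  rw [← Complex.ofReal_sum] at this
  exact_mod_cast this

lemma entEta_mul (x y : ℝ) : entEta (x * y) = x * entEta y + y * entEta x := by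
  unfold entEta
  rcases eq_or_ne x 0 with hx | hx
  · simp [hx]
  rcases eq_or_ne y 0 with hy | hy
  · simp [hy]
  rw [Real.log_mul hx hy]
  ring

lemma pinch_isHermitian {I : Type*} {α : Type*} [DecidableEq α] (f : I → α)
    {M : Matrix I I ℂ} (hM : M.IsHermitian) : (pinch f M).IsHermitian := by
  ext i j
  simp only [pinch, conjTranspose_apply, Matrix.of_apply]
  by_cases h : f i = f j
  · rw [if_pos h.symm, if_pos h]
    calc star (M j i) = Mᴴ i j := rfl
    _ = M i j := by rw [hM.eq]
  · rw [if_neg (fun hh => h hh.symm), if_neg h, star_zero]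

lemma pinch_trace {I : Type*} {α : Type*} [Fintype I] [DecidableEq I] [DecidableEq α]
    (f : I → α) (M : Matrix I I ℂ) : (pinch f M).trace = M.trace := by
  unfold Matrix.trace
  congr 1
  funext i
  simp [Matrix.diag, pinch]

lemma kron_conjTranspose {m' n' : Type*} (A : Matrix m' m' ℂ) (B : Matrix n' n' ℂ) :
    (A ⊗ₖ B)ᴴ = Aᴴ ⊗ₖ Bᴴ := by
  ext ⟨i, k⟩ ⟨j, l⟩
  simp [conjTranspose_apply, kroneckerMap_apply, mul_comm]

lemma kron_isHermitian {m' n' : Type*} {A : Matrix m' m' ℂ} {B : Matrix n' n' ℂ}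
    (hA : A.IsHermitian) (hB : B.IsHermitian) : (A ⊗ₖ B).IsHermitian := by
  unfold Matrix.IsHermitian
  rw [kron_conjTranspose, hA.eq, hB.eq]

lemma kron_unitary {m' n' : Type*} [Fintype m'] [DecidableEq m'] [Fintype n'] [DecidableEq n']
    {U : Matrix m' m' ℂ} {V : Matrix n' n' ℂ}
    (hU : U ∈ Matrix.unitaryGroup m' ℂ) (hV : V ∈ Matrix.unitaryGroup n' ℂ) :
    U ⊗ₖ V ∈ Matrix.unitaryGroup (m' × n') ℂ := by
  rw [Matrix.mem_unitaryGroup_iff']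
  have : star (U ⊗ₖ V) = star U ⊗ₖ star V := kron_conjTranspose U V
  rw [this, ← Matrix.mul_kronecker_mul, (Matrix.mem_unitaryGroup_iff').mp hU,
    (Matrix.mem_unitaryGroup_iff').mp hV, Matrix.one_kronecker_one]

lemma vnEntropy_of_hermitian {I : Type*} [Fintype I] [DecidableEq I] {M : Matrix I I ℂ}
    (hM : M.IsHermitian) : vnEntropy M = ∑ i, entEta (hM.eigenvalues i) := by
  rw [vnEntropy, dif_pos hM]

lemma trace_kron {m' n' : Type*} [Fintype m'] [Fintype n']
    (A : Matrix m' m' ℂ) (B : Matrix n' n' ℂ) : (A ⊗ₖ B).trace = A.trace * B.trace := by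
  simp [Matrix.trace, Matrix.diag, Finset.sum_mul_sum, Fintype.sum_prod_type]

lemma vnEntropy_kron {m' n' : Type*} [Fintype m'] [DecidableEq m'] [Fintype n'] [DecidableEq n']
    {A : Matrix m' m' ℂ} {B : Matrix n' n' ℂ}
    (hA : A.IsHermitian) (hB : B.IsHermitian) (hta : A.trace = 1) (htb : B.trace = 1) :
    vnEntropy (A ⊗ₖ B) = vnEntropy A + vnEntropy B := by
  have hAB : (A ⊗ₖ B).IsHermitian := kron_isHermitian hA hB
  have key : A ⊗ₖ B = ((hA.eigenvectorUnitary : Matrix m' m' ℂ) ⊗ₖ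
      (hB.eigenvectorUnitary : Matrix n' n' ℂ)) *
      diagonal (fun p : m' × n' => ((hA.eigenvalues p.1 * hB.eigenvalues p.2 : ℝ) : ℂ)) *
      star ((hA.eigenvectorUnitary : Matrix m' m' ℂ) ⊗ₖ
        (hB.eigenvectorUnitary : Matrix n' n' ℂ)) := by
    conv_lhs => rw [hA.spectral_theorem, hB.spectral_theorem, Unitary.conjStarAlgAut_apply,
      Unitary.conjStarAlgAut_apply]
    rw [Matrix.mul_kronecker_mul, Matrix.mul_kronecker_mul, Matrix.diagonal_kronecker_diagonal]
    have hst : star ((hA.eigenvectorUnitary : Matrix m' m' ℂ) ⊗ₖ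
        (hB.eigenvectorUnitary : Matrix n' n' ℂ)) =
        star (hA.eigenvectorUnitary : Matrix m' m' ℂ) ⊗ₖ
        star (hB.eigenvectorUnitary : Matrix n' n' ℂ) := kron_conjTranspose _ _
    rw [hst]
    congr 2
    funext p
    simp [Function.comp, Complex.ofReal_mul]
  have hsum := sum_f_eig hAB _ _ (kron_unitary (hA.eigenvectorUnitary).2
    (hB.eigenvectorUnitary).2) key entEta
  rw [vnEntropy_of_hermitian hAB, hsum, vnEntropy_of_hermitian hA, vnEntropy_of_hermitian hB]
  rw [Fintype.sum_prod_type]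
  have expand : ∀ (i : m') (j : n'), entEta (hA.eigenvalues i * hB.eigenvalues j) =
      hA.eigenvalues i * entEta (hB.eigenvalues j) +
      hB.eigenvalues j * entEta (hA.eigenvalues i) := fun i j => entEta_mul _ _
  simp_rw [expand, Finset.sum_add_distrib, ← Finset.mul_sum, ← Finset.sum_mul]
  rw [sum_eig_eq_one hA hta, sum_eig_eq_one hB htb]
  ring_nf

end Aux

/-- if one marginal is symmetric, the global dephasing of the product
state factorizes and the mutual asymmetry vanishes (in either order). -/
theorem mutual_asymmetry_vanishes_of_symmetric {s r : ℕ}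
    (ρS : Matrix (Fin s) (Fin s) ℂ) (ρR : Matrix (Fin r) (Fin r) ℂ)
    (ES : Fin s → ℤ) (ER : Fin r → ℤ)
    (hS : IsDensityMatrix ρS) (hR : IsDensityMatrix ρR) :
    (pinch ER ρR = ρR →
      pinch (globalE ES ER) (ρS ⊗ₖ ρR) = (pinch ES ρS) ⊗ₖ ρR ∧
      asym ES ρS + asym ER ρR - asym (globalE ES ER) (ρS ⊗ₖ ρR) = 0) ∧
    (pinch ES ρS = ρS →
      pinch (globalE ES ER) (ρS ⊗ₖ ρR) = ρS ⊗ₖ (pinch ER ρR) ∧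
      asym ES ρS + asym ER ρR - asym (globalE ES ER) (ρS ⊗ₖ ρR) = 0) := by
  obtain ⟨hSH, _, hST⟩ := hS
  obtain ⟨hRH, _, hRT⟩ := hR
  constructor
  · intro hsym
    have hR0 : ∀ k l, ER k ≠ ER l → ρR k l = 0 := by
      intro k l hkl
      have h := congrFun (congrFun hsym k) l
      simpa [pinch, hkl] using h.symm
    have hfact : pinch (globalE ES ER) (ρS ⊗ₖ ρR) = (pinch ES ρS) ⊗ₖ ρR := by
      ext ⟨i, k⟩ ⟨j, l⟩
      simp only [pinch, globalE, Matrix.of_apply, kroneckerMap_apply]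
      by_cases hkl : ER k = ER l
      · by_cases hij : ES i = ES j
        · simp [hij, hkl]
        · have hne : ¬ (ES i + ER k = ES j + ER l) := by intro hh; exact hij (by omega)
          simp [hne, hij]
      · simp [hR0 k l hkl]
    refine ⟨hfact, ?_⟩
    have h1 : asym ER ρR = 0 := by unfold asym; rw [hsym, sub_self]
    have h2 : asym (globalE ES ER) (ρS ⊗ₖ ρR) = asym ES ρS := by
      unfold asym
      rw [hfact, vnEntropy_kron (pinch_isHermitian ES hSH) hRH
        (by rw [pinch_trace]; exact hST) hRT, vnEntropy_kron hSH hRH hST hRT]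
      ring
    rw [h1, h2]; ring
  · intro hsym
    have hS0 : ∀ i j, ES i ≠ ES j → ρS i j = 0 := by
      intro i j hij
      have h := congrFun (congrFun hsym i) j
      simpa [pinch, hij] using h.symm
    have hfact : pinch (globalE ES ER) (ρS ⊗ₖ ρR) = ρS ⊗ₖ (pinch ER ρR) := by
      ext ⟨i, k⟩ ⟨j, l⟩
      simp only [pinch, globalE, Matrix.of_apply, kroneckerMap_apply]
      by_cases hij : ES i = ES j
      · by_cases hkl : ER k = ER l
        · simp [hij, hkl]
        · have hne : ¬ (ES i + ER k = ES j + ER l) := by intro hh; exact hkl (by omega)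
          simp [hne, hkl]
      · simp [hS0 i j hij]
    refine ⟨hfact, ?_⟩
    have h1 : asym ES ρS = 0 := by unfold asym; rw [hsym, sub_self]
    have h2 : asym (globalE ES ER) (ρS ⊗ₖ ρR) = asym ER ρR := by
      unfold asym
      rw [hfact, vnEntropy_kron hSH (pinch_isHermitian ER hRH) hST
        (by rw [pinch_trace]; exact hRT), vnEntropy_kron hSH hRH hST hRT]
      ring
    rw [h1, h2]; ring
end

section
/- The von Neumann entropy is additive over tensor products: for density matrices ρ on Fin s and σ on Fin r, S(ρ ⊗ σ) = S(ρ) + S(σ), where ⊗ is the Kronecker product of matrices. -/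
open Matrix Kronecker BigOperators ComplexOrder

section Aux
open Polynomial

lemma charpoly_conj' {n : Type*} [Fintype n] [DecidableEq n] {R : Type*} [CommRing R]
    (U B V : Matrix n n R) (hUV : U * V = 1) (hVU : V * U = 1) :
    (U * B * V).charpoly = B.charpoly := by
  unfold Matrix.charpoly charmatrix
  have hmap : ∀ M N : Matrix n n R, ((M * N).map (C : R →+* R[X]) : Matrix n n R[X])
      = M.map C * N.map C := fun M N => Matrix.map_mul
  have h1 : (U.map (C : R →+* R[X])) * (V.map C) = 1 := by
    rw [← hmap, hUV]; simp
  have h2 : (V.map (C : R →+* R[X])) * (U.map C) = 1 := by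
    rw [← hmap, hVU]; simp
  have key : Matrix.scalar n (X : R[X]) - (RingHom.mapMatrix C) (U * B * V)
      = U.map C * (Matrix.scalar n (X : R[X]) - (RingHom.mapMatrix C) B) * V.map C := by
    simp only [RingHom.mapMatrix_apply]
    rw [Matrix.mul_sub, Matrix.sub_mul, hmap, hmap]
    congr 1
    rw [Matrix.scalar_apply, mul_assoc, ← Matrix.smul_eq_diagonal_mul, Matrix.mul_smul, h1]
    simp [Matrix.smul_eq_diagonal_mul]
  rw [key, Matrix.det_mul, Matrix.det_mul, mul_comm, ← mul_assoc, ← Matrix.det_mul, h2]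
  simp

lemma charpoly_diagonal' {n : Type*} [Fintype n] [DecidableEq n] {R : Type*} [CommRing R]
    (a : n → R) : (Matrix.diagonal a).charpoly = ∏ i, (X - C (a i)) := by
  unfold Matrix.charpoly
  have : charmatrix (Matrix.diagonal a) = Matrix.diagonal (fun i => (X : R[X]) - C (a i)) := by
    ext i j
    by_cases h : i = j
    · subst h; simp [charmatrix_apply_eq]
    · simp [charmatrix_apply_ne _ _ _ h, Matrix.diagonal_apply_ne _ h, Matrix.diagonal_apply_ne a h]
  rw [this, Matrix.det_diagonal]

lemma roots_prod' {n : Type*} [Fintype n] [DecidableEq n] (a : n → ℂ) :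
    (∏ i, (X - C (a i))).roots = Finset.univ.val.map a := by
  rw [show (∏ i, (X - C (a i))) = ((Finset.univ.val.map a).map (fun r => X - C r)).prod by
    rw [Multiset.map_map]; rfl]
  exact roots_multiset_prod_X_sub_C _

lemma sum_f_eigs {n : Type*} [Fintype n] [DecidableEq n] (f : ℝ → ℝ) {A : Matrix n n ℂ}
    (hA : A.IsHermitian) {d : n → ℝ} {U V : Matrix n n ℂ} (hUV : U * V = 1) (hVU : V * U = 1)
    (h : A = U * Matrix.diagonal ((RCLike.ofReal : ℝ → ℂ) ∘ d) * V) :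
    ∑ i, f (hA.eigenvalues i) = ∑ i, f (d i) := by
  have hU0 : (hA.eigenvectorUnitary : Matrix n n ℂ) * star (hA.eigenvectorUnitary : Matrix n n ℂ) = 1 := by
    simpa using (Matrix.mem_unitaryGroup_iff.mp hA.eigenvectorUnitary.2)
  have hU0' : star (hA.eigenvectorUnitary : Matrix n n ℂ) * (hA.eigenvectorUnitary : Matrix n n ℂ) = 1 := by
    simpa using (Matrix.mem_unitaryGroup_iff'.mp hA.eigenvectorUnitary.2)
  have hc1 : A.charpoly = (Matrix.diagonal ((RCLike.ofReal : ℝ → ℂ) ∘ hA.eigenvalues)).charpoly := by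
    conv_lhs => rw [hA.spectral_theorem]
    exact charpoly_conj' _ _ _ hU0 hU0'
  have hc2 : A.charpoly = (Matrix.diagonal ((RCLike.ofReal : ℝ → ℂ) ∘ d)).charpoly := by
    conv_lhs => rw [h]
    exact charpoly_conj' _ _ _ hUV hVU
  have hroots : Finset.univ.val.map ((RCLike.ofReal : ℝ → ℂ) ∘ hA.eigenvalues)
      = Finset.univ.val.map ((RCLike.ofReal : ℝ → ℂ) ∘ d) := by
    have := hc1.symm.trans hc2
    rw [charpoly_diagonal', charpoly_diagonal'] at this
    have := congrArg Polynomial.roots this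
    rwa [roots_prod', roots_prod'] at this
  have hre : Finset.univ.val.map hA.eigenvalues = Finset.univ.val.map d := by
    have := congrArg (Multiset.map Complex.re) hroots
    simpa [Multiset.map_map, Function.comp] using this
  calc ∑ i, f (hA.eigenvalues i) = ((Finset.univ.val.map hA.eigenvalues).map f).sum := by
        rw [Multiset.map_map]; rfl
    _ = ((Finset.univ.val.map d).map f).sum := by rw [hre]
    _ = ∑ i, f (d i) := by rw [Multiset.map_map]; rfl

lemma entEta_mul_s7 {a b : ℝ} (ha : 0 ≤ a) (hb : 0 ≤ b) :
    entEta (a * b) = a * entEta b + b * entEta a := by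
  rcases eq_or_lt_of_le ha with h | h
  · simp [entEta, ← h]
  rcases eq_or_lt_of_le hb with h' | h'
  · simp [entEta, ← h']
  unfold entEta
  rw [Real.log_mul h.ne' h'.ne']
  ring


lemma sum_eigs_eq_one {n : Type*} [Fintype n] [DecidableEq n] {A : Matrix n n ℂ}
    (hA : A.IsHermitian) (ht : A.trace = 1) : ∑ i, hA.eigenvalues i = 1 := by
  have hU0' : star (hA.eigenvectorUnitary : Matrix n n ℂ) * (hA.eigenvectorUnitary : Matrix n n ℂ) = 1 := by
    simpa using (Matrix.mem_unitaryGroup_iff'.mp hA.eigenvectorUnitary.2)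
  have : A.trace = (Matrix.diagonal ((RCLike.ofReal : ℝ → ℂ) ∘ hA.eigenvalues)).trace := by
    conv_lhs => rw [hA.spectral_theorem]
    rw [Unitary.conjStarAlgAut_apply, Matrix.trace_mul_cycle, hU0', one_mul]
  rw [ht, Matrix.trace_diagonal] at this
  have h2 : ((1 : ℝ) : ℂ) = ((∑ i, hA.eigenvalues i : ℝ) : ℂ) := by push_cast; simpa using this
  exact (Complex.ofReal_injective h2).symm


end Aux

/-- von Neumann entropy is additive over tensor (Kronecker) products. -/
theorem vnEntropy_kronecker {s r : ℕ}
    (ρ : Matrix (Fin s) (Fin s) ℂ) (σ : Matrix (Fin r) (Fin r) ℂ)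
    (hρ : IsDensityMatrix ρ) (hσ : IsDensityMatrix σ) :
    vnEntropy (ρ ⊗ₖ σ) = vnEntropy ρ + vnEntropy σ := by
  obtain ⟨hρH, hρP, hρT⟩ := hρ
  obtain ⟨hσH, hσP, hσT⟩ := hσ
  have hK : (ρ ⊗ₖ σ).IsHermitian := by
    show (ρ ⊗ₖ σ)ᴴ = ρ ⊗ₖ σ
    ext ⟨i, j⟩ ⟨k, l⟩
    have h1 := congrFun (congrFun hρH i) k
    have h2 := congrFun (congrFun hσH j) l
    simp only [Matrix.conjTranspose_apply, Matrix.kroneckerMap_apply, star_mul'] at *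
    rw [h1, h2]
  set U1 := (hρH.eigenvectorUnitary : Matrix (Fin s) (Fin s) ℂ)
  set U2 := (hσH.eigenvectorUnitary : Matrix (Fin r) (Fin r) ℂ)
  have hU1 : U1 * star U1 = 1 := Matrix.mem_unitaryGroup_iff.mp hρH.eigenvectorUnitary.2
  have hU1' : star U1 * U1 = 1 := Matrix.mem_unitaryGroup_iff'.mp hρH.eigenvectorUnitary.2
  have hU2 : U2 * star U2 = 1 := Matrix.mem_unitaryGroup_iff.mp hσH.eigenvectorUnitary.2
  have hU2' : star U2 * U2 = 1 := Matrix.mem_unitaryGroup_iff'.mp hσH.eigenvectorUnitary.2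
  set d : Fin s × Fin r → ℝ := fun p => hρH.eigenvalues p.1 * hσH.eigenvalues p.2 with hd
  have hDK : Matrix.diagonal ((RCLike.ofReal : ℝ → ℂ) ∘ d)
      = (Matrix.diagonal ((RCLike.ofReal : ℝ → ℂ) ∘ hρH.eigenvalues))
        ⊗ₖ (Matrix.diagonal ((RCLike.ofReal : ℝ → ℂ) ∘ hσH.eigenvalues)) := by
    rw [Matrix.diagonal_kronecker_diagonal]
    exact congrArg Matrix.diagonal (funext fun mn => by simp [hd, RCLike.ofReal_mul])
  have hdecomp : ρ ⊗ₖ σ = (U1 ⊗ₖ U2) * Matrix.diagonal ((RCLike.ofReal : ℝ → ℂ) ∘ d)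
      * ((star U1) ⊗ₖ (star U2)) := by
    rw [hDK, ← Matrix.mul_kronecker_mul, ← Matrix.mul_kronecker_mul]
    exact congrArg₂ (fun A B => A ⊗ₖ B) hρH.spectral_theorem hσH.spectral_theorem
  have hUV : (U1 ⊗ₖ U2) * ((star U1) ⊗ₖ (star U2)) = 1 := by
    rw [← Matrix.mul_kronecker_mul, hU1, hU2, Matrix.one_kronecker_one]
  have hVU : ((star U1) ⊗ₖ (star U2)) * (U1 ⊗ₖ U2) = 1 := by
    rw [← Matrix.mul_kronecker_mul, hU1', hU2', Matrix.one_kronecker_one]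
  rw [vnEntropy, dif_pos hK, vnEntropy, dif_pos hρH, vnEntropy, dif_pos hσH]
  rw [sum_f_eigs entEta hK hUV hVU hdecomp]
  have hsum1 := sum_eigs_eq_one hρH hρT
  have hsum2 := sum_eigs_eq_one hσH hσT
  rw [Fintype.sum_prod_type]
  have key : ∀ i j, entEta (d (i, j)) = hρH.eigenvalues i * entEta (hσH.eigenvalues j)
      + hσH.eigenvalues j * entEta (hρH.eigenvalues i) := fun i j =>
    entEta_mul_s7 (hρP.eigenvalues_nonneg i) (hσP.eigenvalues_nonneg j)
  have e1 : ∀ i, ∑ j, entEta (d (i, j))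
      = hρH.eigenvalues i * (∑ j, entEta (hσH.eigenvalues j)) + entEta (hρH.eigenvalues i) := by
    intro i
    simp_rw [key i]
    rw [Finset.sum_add_distrib, ← Finset.mul_sum, ← Finset.sum_mul, hsum2, one_mul]
  simp_rw [e1]
  rw [Finset.sum_add_distrib, ← Finset.sum_mul, hsum1, one_mul, add_comm]
end
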